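/- arXiv:2508.05854 — 8 statements merged into one kernel-verified Lean document; each statement's English description precedes it below -/
import Mathlib

section
/- Let m, n, N be positive integers, P an N×n complex matrix, and Π an N×N complex matrix which is the orthogonal projection onto the column space of P (Π Hermitian, Π·Π = Π, range Π = range P). Then for every Hermitian matrix ρ indexed by (Fin m) × (Fin N), the following are equivalent: (i) ρ is PSD and ρ = (I_m ⊗ Π)·ρ·(I_m ⊗ Π); (ii) there exists a PSD matrix X indexed by (Fin m) × (Fin n) with ρ = (I_m ⊗ P)·X·(I_m ⊗ P)†. -/
open Matrix
open scoped Kronecker ComplexOrder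

lemma kron_conjT {m n p q : Type*} [Fintype m] [Fintype n]
    (A : Matrix m n ℂ) (B : Matrix p q ℂ) : (A ⊗ₖ B)ᴴ = Aᴴ ⊗ₖ Bᴴ := by
  ext ⟨i, j⟩ ⟨k, l⟩
  simp [conjTranspose_apply, mul_comm]

lemma QP_eq {n N : ℕ} (P : Matrix (Fin N) (Fin n) ℂ) (Q : Matrix (Fin N) (Fin N) ℂ)
    (hQidem : Q * Q = Q)
    (hQrange : LinearMap.range Q.mulVecLin = LinearMap.range P.mulVecLin) :
    Q * P = P := by
  ext i j
  have hcol : (fun k => P k j) ∈ LinearMap.range P.mulVecLin :=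
    ⟨Pi.single j 1, by ext k; simp [mulVecLin_apply, mulVec, dotProduct, Pi.single_apply]⟩
  rw [← hQrange] at hcol
  obtain ⟨w, hw⟩ := hcol
  have : Q.mulVec (fun k => P k j) = fun k => P k j := by
    rw [← hw]
    simp only [mulVecLin_apply]
    rw [mulVec_mulVec, hQidem]
  calc (Q * P) i j = Q.mulVec (fun k => P k j) i := by
        simp [mul_apply, mulVec, dotProduct]
    _ = P i j := by rw [this]

theorem stmt1 (m n N : ℕ) (hm : 0 < m) (hn : 0 < n) (hN : 0 < N)
    (P : Matrix (Fin N) (Fin n) ℂ)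
    (Q : Matrix (Fin N) (Fin N) ℂ)
    (hQH : Q.IsHermitian) (hQidem : Q * Q = Q)
    (hQrange : LinearMap.range Q.mulVecLin = LinearMap.range P.mulVecLin)
    (ρ : Matrix (Fin m × Fin N) (Fin m × Fin N) ℂ) (hρ : ρ.IsHermitian) :
    (ρ.PosSemidef ∧
        ρ = ((1 : Matrix (Fin m) (Fin m) ℂ) ⊗ₖ Q) * ρ * ((1 : Matrix (Fin m) (Fin m) ℂ) ⊗ₖ Q))
      ↔ ∃ X : Matrix (Fin m × Fin n) (Fin m × Fin n) ℂ,
          X.PosSemidef ∧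
            ρ = ((1 : Matrix (Fin m) (Fin m) ℂ) ⊗ₖ P) * X * ((1 : Matrix (Fin m) (Fin m) ℂ) ⊗ₖ P)ᴴ := by
  have hQP : Q * P = P := QP_eq P Q hQidem hQrange
  set A : Matrix (Fin m × Fin N) (Fin m × Fin n) ℂ := (1 : Matrix (Fin m) (Fin m) ℂ) ⊗ₖ P with hA
  set K : Matrix (Fin m × Fin N) (Fin m × Fin N) ℂ := (1 : Matrix (Fin m) (Fin m) ℂ) ⊗ₖ Q with hK
  have hQk : Kᴴ = K := by rw [hK, kron_conjT, conjTranspose_one, hQH.eq]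
  have h1 : K * A = A := by rw [hK, hA, ← mul_kronecker_mul, Matrix.one_mul, hQP]
  have h2 : Aᴴ * K = Aᴴ := by rw [← hQk, ← conjTranspose_mul, h1]
  constructor
  · rintro ⟨hpsd, heq⟩
    have hR : ∃ R : Matrix (Fin n) (Fin N) ℂ, P * R = Q := by
      have hcol : ∀ j : Fin N, ∃ w : Fin n → ℂ, P.mulVec w = (fun k => Q k j) := by
        intro j
        have : (fun k => Q k j) ∈ LinearMap.range P.mulVecLin := by
          rw [← hQrange]
          exact ⟨Pi.single j 1, by ext k; simp [mulVecLin_apply, mulVec, dotProduct, Pi.single_apply]⟩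
        obtain ⟨w, hw⟩ := this
        exact ⟨w, hw⟩
      choose w hw using hcol
      refine ⟨Matrix.of fun i j => w j i, ?_⟩
      ext i j
      have := congrFun (hw j) i
      simpa [mul_apply, mulVec, dotProduct] using this
    obtain ⟨R, hPR⟩ := hR
    set B : Matrix (Fin m × Fin n) (Fin m × Fin N) ℂ := (1 : Matrix (Fin m) (Fin m) ℂ) ⊗ₖ R with hB
    have hAB : A * B = K := by rw [hA, hB, hK, ← mul_kronecker_mul, Matrix.one_mul, hPR]
    refine ⟨B * ρ * Bᴴ, hpsd.mul_mul_conjTranspose_same _, ?_⟩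
    calc ρ = K * ρ * K := heq
      _ = (A * B) * ρ * (A * B)ᴴ := by rw [hAB, hQk]
      _ = A * (B * ρ * Bᴴ) * Aᴴ := by
          simp only [conjTranspose_mul, Matrix.mul_assoc]
  · rintro ⟨X, hX, heq⟩
    refine ⟨by rw [heq]; exact hX.mul_mul_conjTranspose_same _, ?_⟩
    rw [heq]
    calc A * X * Aᴴ = (K * A) * X * (Aᴴ * K) := by rw [h1, h2]
      _ = K * (A * X * Aᴴ) * K := by simp only [Matrix.mul_assoc]
end

section
/- Let ι be a finite type and suppose P is a complex matrix with rows indexed by I_k and columns indexed by ι whose column space equals Sym_k. Then the following two sets of matrices indexed by (Fin d_a) × (Fin d) are equal: { PTr_k(ρ) : ρ is a PSD matrix indexed by (Fin d_a) × I_k with ρ = (I ⊗ Π_k)·ρ·(I ⊗ Π_k) } and { PTr_k((I ⊗ P)·X·(I ⊗ P)†) : X is a PSD matrix indexed by (Fin d_a) × ι }. -/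
open Matrix
open scoped Kronecker ComplexOrder

noncomputable section

/-- The subspace of symmetric vectors: `ψ (i ∘ π) = ψ i` for every permutation `π`. -/
def SymSpace (d k : ℕ) : Submodule ℂ ((Fin k → Fin d) → ℂ) where
  carrier := {ψ | ∀ (i : Fin k → Fin d) (π : Equiv.Perm (Fin k)), ψ (i ∘ π) = ψ i}
  add_mem' := by
    intro ψ φ hψ hφ i π
    simp [hψ i π, hφ i π]
  zero_mem' := by intro i π; rfl
  smul_mem' := by
    intro c ψ hψ i π
    simp [hψ i π]

/-- `cons0 b r` is the sequence `b⌢r` sending `0` to `b` and `s+1` to `r s`. -/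
def cons0 {d k : ℕ} (b : Fin d) (r : Fin (k - 1) → Fin d) : Fin k → Fin d :=
  fun s => if h : (s : ℕ) = 0 then b else r ⟨(s : ℕ) - 1, by have := s.isLt; omega⟩

/-- Partial trace over the last `k - 1` factors. -/
def PTr (da d k : ℕ)
    (M : Matrix (Fin da × (Fin k → Fin d)) (Fin da × (Fin k → Fin d)) ℂ) :
    Matrix (Fin da × Fin d) (Fin da × Fin d) ℂ :=
  fun p q => ∑ r : Fin (k - 1) → Fin d, M (p.1, cons0 p.2 r) (q.1, cons0 q.2 r)

end

theorem stmt2 (da d k : ℕ) (hda : 0 < da) (hd : 0 < d) (hk : 0 < k)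
    (ι : Type) [Fintype ι] [DecidableEq ι]
    (P : Matrix (Fin k → Fin d) ι ℂ)
    (hP : LinearMap.range P.mulVecLin = SymSpace d k)
    (Q : Matrix (Fin k → Fin d) (Fin k → Fin d) ℂ)
    (hQH : Q.IsHermitian) (hQidem : Q * Q = Q)
    (hQrange : LinearMap.range Q.mulVecLin = SymSpace d k) :
    {σ : Matrix (Fin da × Fin d) (Fin da × Fin d) ℂ |
        ∃ ρ : Matrix (Fin da × (Fin k → Fin d)) (Fin da × (Fin k → Fin d)) ℂ,
          ρ.PosSemidef ∧
          ρ = ((1 : Matrix (Fin da) (Fin da) ℂ) ⊗ₖ Q) * ρ * ((1 : Matrix (Fin da) (Fin da) ℂ) ⊗ₖ Q) ∧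
          σ = PTr da d k ρ} =
    {σ : Matrix (Fin da × Fin d) (Fin da × Fin d) ℂ |
        ∃ X : Matrix (Fin da × ι) (Fin da × ι) ℂ,
          X.PosSemidef ∧
          σ = PTr da d k (((1 : Matrix (Fin da) (Fin da) ℂ) ⊗ₖ P) * X *
            ((1 : Matrix (Fin da) (Fin da) ℂ) ⊗ₖ P)ᴴ)} := by
  
  classical
  -- Q acts as identity on its range
  have hQfix : ∀ x ∈ LinearMap.range Q.mulVecLin, Q.mulVec x = x := by
    rintro x ⟨y, rfl⟩
    have := congrArg (fun M => M.mulVec y) hQidem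
    simpa [Matrix.mulVecLin_apply, Matrix.mulVec_mulVec] using this
  -- Q * P = P
  have hQP : Q * P = P := by
    ext i j
    have hcol : (fun l => P l j) ∈ LinearMap.range P.mulVecLin := by
      refine ⟨Pi.single j 1, ?_⟩
      ext l
      simp [Matrix.mulVecLin_apply, Matrix.mulVec_single]
    rw [hP, ← hQrange] at hcol
    have := congrFun (hQfix _ hcol) i
    simpa [Matrix.mul_apply, Matrix.mulVec, dotProduct] using this
  -- choose B with P * B = Q
  have hBex : ∀ j, ∃ v, P.mulVec v = fun i => Q i j := by
    intro j
    have hcol : (fun l => Q l j) ∈ LinearMap.range Q.mulVecLin := by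
      refine ⟨Pi.single j 1, ?_⟩
      ext l
      simp [Matrix.mulVecLin_apply, Matrix.mulVec_single]
    rw [hQrange, ← hP] at hcol
    obtain ⟨v, hv⟩ := hcol
    exact ⟨v, by simpa [Matrix.mulVecLin_apply] using hv⟩
  set B : Matrix ι (Fin k → Fin d) ℂ := fun l j => Classical.choose (hBex j) l with hB
  have hPB : P * B = Q := by
    ext i j
    have := congrFun (Classical.choose_spec (hBex j)) i
    rw [Matrix.mul_apply]
    simpa [Matrix.mul_apply, Matrix.mulVec, dotProduct, hB] using this
  have hQHerm : ((1 : Matrix (Fin da) (Fin da) ℂ) ⊗ₖ Q)ᴴ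
      = (1 : Matrix (Fin da) (Fin da) ℂ) ⊗ₖ Q := by
    ext ⟨a, i⟩ ⟨b, j⟩
    simp only [Matrix.conjTranspose_apply, Matrix.kroneckerMap_apply, star_mul',
      Matrix.one_apply, apply_ite, star_one, star_zero, hQH.apply, eq_comm]
  have h1 : ((1 : Matrix (Fin da) (Fin da) ℂ) ⊗ₖ P) * ((1 : Matrix (Fin da) (Fin da) ℂ) ⊗ₖ B)
      = (1 : Matrix (Fin da) (Fin da) ℂ) ⊗ₖ Q := by
    rw [← Matrix.mul_kronecker_mul, Matrix.one_mul, hPB]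
  have h2 : ((1 : Matrix (Fin da) (Fin da) ℂ) ⊗ₖ Q) * ((1 : Matrix (Fin da) (Fin da) ℂ) ⊗ₖ P)
      = (1 : Matrix (Fin da) (Fin da) ℂ) ⊗ₖ P := by
    rw [← Matrix.mul_kronecker_mul, Matrix.one_mul, hQP]
  ext σ
  simp only [Set.mem_setOf_eq]
  constructor
  · rintro ⟨ρ, hρ, hρQ, rfl⟩
    refine ⟨((1 : Matrix (Fin da) (Fin da) ℂ) ⊗ₖ B) * ρ *
        ((1 : Matrix (Fin da) (Fin da) ℂ) ⊗ₖ B)ᴴ, hρ.mul_mul_conjTranspose_same _, ?_⟩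
    refine congrArg (PTr da d k) ?_
    calc ρ = ((1 : Matrix (Fin da) (Fin da) ℂ) ⊗ₖ Q) * ρ *
          ((1 : Matrix (Fin da) (Fin da) ℂ) ⊗ₖ Q)ᴴ := by rw [hQHerm]; exact hρQ
      _ = (((1 : Matrix (Fin da) (Fin da) ℂ) ⊗ₖ P) * ((1 : Matrix (Fin da) (Fin da) ℂ) ⊗ₖ B)) * ρ *
          (((1 : Matrix (Fin da) (Fin da) ℂ) ⊗ₖ P) * ((1 : Matrix (Fin da) (Fin da) ℂ) ⊗ₖ B))ᴴ := by
          rw [h1]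
      _ = ((1 : Matrix (Fin da) (Fin da) ℂ) ⊗ₖ P) *
          (((1 : Matrix (Fin da) (Fin da) ℂ) ⊗ₖ B) * ρ * ((1 : Matrix (Fin da) (Fin da) ℂ) ⊗ₖ B)ᴴ) *
          ((1 : Matrix (Fin da) (Fin da) ℂ) ⊗ₖ P)ᴴ := by
          rw [Matrix.conjTranspose_mul]; simp only [Matrix.mul_assoc]
  · rintro ⟨X, hX, rfl⟩
    refine ⟨((1 : Matrix (Fin da) (Fin da) ℂ) ⊗ₖ P) * X *
        ((1 : Matrix (Fin da) (Fin da) ℂ) ⊗ₖ P)ᴴ, hX.mul_mul_conjTranspose_same _, ?_, rfl⟩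
    calc ((1 : Matrix (Fin da) (Fin da) ℂ) ⊗ₖ P) * X * ((1 : Matrix (Fin da) (Fin da) ℂ) ⊗ₖ P)ᴴ
        = (((1 : Matrix (Fin da) (Fin da) ℂ) ⊗ₖ Q) * ((1 : Matrix (Fin da) (Fin da) ℂ) ⊗ₖ P)) * X *
          (((1 : Matrix (Fin da) (Fin da) ℂ) ⊗ₖ Q) * ((1 : Matrix (Fin da) (Fin da) ℂ) ⊗ₖ P))ᴴ := by
          rw [h2]
      _ = ((1 : Matrix (Fin da) (Fin da) ℂ) ⊗ₖ Q) *
          (((1 : Matrix (Fin da) (Fin da) ℂ) ⊗ₖ P) * X * ((1 : Matrix (Fin da) (Fin da) ℂ) ⊗ₖ P)ᴴ) *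
          ((1 : Matrix (Fin da) (Fin da) ℂ) ⊗ₖ Q)ᴴ := by
          rw [Matrix.conjTranspose_mul]; simp only [Matrix.mul_assoc]
      _ = ((1 : Matrix (Fin da) (Fin da) ℂ) ⊗ₖ Q) *
          (((1 : Matrix (Fin da) (Fin da) ℂ) ⊗ₖ P) * X * ((1 : Matrix (Fin da) (Fin da) ℂ) ⊗ₖ P)ᴴ) *
          ((1 : Matrix (Fin da) (Fin da) ℂ) ⊗ₖ Q) := by rw [hQHerm]
end

section
/- Define the B-partial transpose of a matrix M indexed by (Fin d_a) × I_k by T_B(M)((a,i),(a',i')) := M((a,i'),(a',i)). Then for every Hermitian matrix X indexed by (Fin d_a) × J_k, the matrix T_B((I ⊗ P)·X·(I ⊗ P)†) is PSD if and only if T(X) is PSD. -/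
open Matrix
open scoped Kronecker ComplexOrder

noncomputable section

instance monoDecidable {k d : ℕ} : DecidablePred (Monotone : (Fin k → Fin d) → Prop) :=
  fun f => decidable_of_iff (∀ a b : Fin k, a ≤ b → f a ≤ f b) Iff.rfl

/-- `Jk d k` : nondecreasing sequences of length `k` from `{0, …, d-1}`. -/
abbrev Jk (d k : ℕ) := {f : Fin k → Fin d // Monotone f}

/-- the nondecreasing rearrangement of a sequence. -/
def sortTuple {d k : ℕ} (i : Fin k → Fin d) : Jk d k :=
  ⟨i ∘ Tuple.sort i, Tuple.monotone_sort i⟩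

/-- `permCount j` : the number of sequences whose sorted rearrangement is `j`. -/
def permCount {d k : ℕ} (j : Jk d k) : ℕ :=
  (Finset.univ.filter fun i : Fin k → Fin d => sortTuple i = j).card

/-- The scaled partition matrix `P`. -/
def Pmat (d k : ℕ) : Matrix (Fin k → Fin d) (Jk d k) ℂ :=
  fun i j => if sortTuple i = j then (((permCount j : ℝ) ^ (-(1/2) : ℝ) : ℝ) : ℂ) else 0

/-- The operator `A`. -/
def Amap (da d k : ℕ) (X : Matrix (Fin da × Jk d k) (Fin da × Jk d k) ℂ) :
    Matrix (Fin da × Fin d) (Fin da × Fin d) ℂ :=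
  PTr da d k (((1 : Matrix (Fin da) (Fin da) ℂ) ⊗ₖ Pmat d k) * X *
    ((1 : Matrix (Fin da) (Fin da) ℂ) ⊗ₖ Pmat d k)ᴴ)

/-- The extension operator `E` : `E(W) ((a,i),(a',i')) = W ((a, i 0), (a', i' 0))` when
`i` and `i'` agree on all later coordinates, and `0` otherwise. -/
def Emat (da d k : ℕ) (hk : 0 < k)
    (W : Matrix (Fin da × Fin d) (Fin da × Fin d) ℂ) :
    Matrix (Fin da × (Fin k → Fin d)) (Fin da × (Fin k → Fin d)) ℂ :=
  fun p q =>
    if ∀ s : Fin (k - 1),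
        p.2 ⟨(s : ℕ) + 1, by have := s.isLt; omega⟩ =
          q.2 ⟨(s : ℕ) + 1, by have := s.isLt; omega⟩
    then W (p.1, p.2 ⟨0, hk⟩) (q.1, q.2 ⟨0, hk⟩) else 0

/-- The adjoint operator `A†`. -/
def Adag (da d k : ℕ) (hk : 0 < k)
    (W : Matrix (Fin da × Fin d) (Fin da × Fin d) ℂ) :
    Matrix (Fin da × Jk d k) (Fin da × Jk d k) ℂ :=
  ((1 : Matrix (Fin da) (Fin da) ℂ) ⊗ₖ Pmat d k)ᴴ * Emat da d k hk W *
    ((1 : Matrix (Fin da) (Fin da) ℂ) ⊗ₖ Pmat d k)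

/-- Partial transpose in the second index. -/
def pTransp {m α : Type*} (M : Matrix (m × α) (m × α) ℂ) : Matrix (m × α) (m × α) ℂ :=
  fun p q => M (p.1, q.2) (q.1, p.2)

/-- Squared Frobenius norm. -/
def frobSq {α β : Type*} [Fintype α] [Fintype β] (M : Matrix α β ℂ) : ℝ :=
  ∑ p, ∑ q, ‖M p q‖ ^ 2

/-- Largest eigenvalue of a Hermitian matrix. -/
def lamMax {n : Type*} [Fintype n] [DecidableEq n]
    {M : Matrix n n ℂ} (hM : M.IsHermitian) : ℝ :=
  ⨆ i, hM.eigenvalues i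

end

lemma sortTuple_self {d k : ℕ} (j : Jk d k) : sortTuple j.val = j := by
  apply Subtype.ext
  show j.val ∘ Tuple.sort j.val = j.val
  rw [Tuple.sort_eq_refl_iff_monotone.mpr j.2]
  rfl

lemma permCount_pos {d k : ℕ} (j : Jk d k) : 0 < permCount j := by
  apply Finset.card_pos.mpr
  exact ⟨j.val, Finset.mem_filter.mpr ⟨Finset.mem_univ _, sortTuple_self j⟩⟩

lemma Pmat_star {d k : ℕ} (i : Fin k → Fin d) (j : Jk d k) :
    star (Pmat d k i j) = Pmat d k i j := by
  simp [Pmat, apply_ite star, Complex.star_def, Complex.conj_ofReal]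

lemma PtP {d k : ℕ} : (Pmat d k)ᴴ * Pmat d k = 1 := by
  ext j j'
  simp only [Matrix.mul_apply, Matrix.conjTranspose_apply, Pmat_star]
  simp only [Pmat, ite_zero_mul_ite_zero]
  by_cases h : j = j'
  · subst h
    simp only [and_self, Matrix.one_apply_eq, Finset.sum_ite, Finset.sum_const,
      Finset.sum_const_zero, smul_zero, add_zero]
    show (permCount j) • _ = (1 : ℂ)
    have hp : (0:ℝ) < (permCount j : ℝ) := by exact_mod_cast permCount_pos j
    rw [nsmul_eq_mul, ← Complex.ofReal_mul, ← Real.rpow_add hp]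
    norm_num
    rw [Real.rpow_neg_one, ← Complex.ofReal_natCast, ← Complex.ofReal_mul,
      mul_inv_cancel₀ hp.ne', Complex.ofReal_one]
  · rw [Matrix.one_apply_ne h, Finset.sum_eq_zero]
    intro i _
    rw [if_neg]
    rintro ⟨h1, h2⟩
    exact h (h1 ▸ h2)

lemma QXQ_apply {da : ℕ} {I J : Type*} [Fintype I] [Fintype J] [DecidableEq I] [DecidableEq J]
    (R : Matrix I J ℂ) (X : Matrix (Fin da × J) (Fin da × J) ℂ)
    (a a' : Fin da) (i i' : I) :
    (((1 : Matrix (Fin da) (Fin da) ℂ) ⊗ₖ R) * X *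
      ((1 : Matrix (Fin da) (Fin da) ℂ) ⊗ₖ R)ᴴ) (a, i) (a', i') =
    ∑ j, ∑ j', R i j * X (a, j) (a', j') * star (R i' j') := by
  simp [Matrix.mul_apply, Matrix.conjTranspose_apply, Fintype.sum_prod_type,
    Matrix.kroneckerMap_apply, Matrix.one_apply, Finset.sum_mul, Finset.mul_sum,
    apply_ite, ite_mul, mul_ite, mul_zero, zero_mul, Finset.sum_ite_eq,
    Finset.sum_ite_eq']
  exact Finset.sum_comm

lemma pTransp_conj {da d k : ℕ} (X : Matrix (Fin da × Jk d k) (Fin da × Jk d k) ℂ) :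
    pTransp (((1 : Matrix (Fin da) (Fin da) ℂ) ⊗ₖ Pmat d k) * X *
        ((1 : Matrix (Fin da) (Fin da) ℂ) ⊗ₖ Pmat d k)ᴴ) =
      ((1 : Matrix (Fin da) (Fin da) ℂ) ⊗ₖ Pmat d k) * pTransp X *
        ((1 : Matrix (Fin da) (Fin da) ℂ) ⊗ₖ Pmat d k)ᴴ := by
  ext ⟨a, i⟩ ⟨a', i'⟩
  show (((1 : Matrix (Fin da) (Fin da) ℂ) ⊗ₖ Pmat d k) * X *
      ((1 : Matrix (Fin da) (Fin da) ℂ) ⊗ₖ Pmat d k)ᴴ) (a, i') (a', i) = _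
  rw [QXQ_apply, QXQ_apply]
  rw [Finset.sum_comm]
  refine Finset.sum_congr rfl fun j _ => Finset.sum_congr rfl fun j' _ => ?_
  simp only [pTransp, Pmat_star]
  ring

lemma QtQ (da d k : ℕ) :
    ((1 : Matrix (Fin da) (Fin da) ℂ) ⊗ₖ Pmat d k)ᴴ *
      ((1 : Matrix (Fin da) (Fin da) ℂ) ⊗ₖ Pmat d k) = 1 := by
  have h : ((1 : Matrix (Fin da) (Fin da) ℂ) ⊗ₖ Pmat d k)ᴴ =
      ((1 : Matrix (Fin da) (Fin da) ℂ) ⊗ₖ (Pmat d k)ᴴ) := by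
    ext ⟨a, j⟩ ⟨a', i⟩
    simp [Matrix.conjTranspose_apply, Matrix.kroneckerMap_apply, Matrix.one_apply,
      apply_ite star, Pmat_star, eq_comm]
  rw [h, ← Matrix.mul_kronecker_mul, Matrix.one_mul, PtP, Matrix.one_kronecker_one]


theorem stmt3 (da d k : ℕ) (hda : 0 < da) (hd : 0 < d) (hk : 0 < k) :
    ∀ X : Matrix (Fin da × Jk d k) (Fin da × Jk d k) ℂ, X.IsHermitian →
      ((pTransp (((1 : Matrix (Fin da) (Fin da) ℂ) ⊗ₖ Pmat d k) * X *
          ((1 : Matrix (Fin da) (Fin da) ℂ) ⊗ₖ Pmat d k)ᴴ)).PosSemidef ↔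
        (pTransp X).PosSemidef) := by
  intro X hX
  rw [pTransp_conj]
  set Q := ((1 : Matrix (Fin da) (Fin da) ℂ) ⊗ₖ Pmat d k) with hQ
  constructor
  · intro h
    have := h.conjTranspose_mul_mul_same Q
    simp only [← Matrix.mul_assoc] at this
    rwa [QtQ da d k, Matrix.one_mul, Matrix.mul_assoc, QtQ, Matrix.mul_one] at this
  · intro h
    exact h.mul_mul_conjTranspose_same Q
end

section
/- For every finite index set F, nonnegative reals w_i (i ∈ F), vectors x_i ∈ ℂ^{d_a} and y_i ∈ ℂ^{d}, there exists a PSD matrix ρ' indexed by (Fin d_a) × I_k such that ρ' = (I ⊗ Π_k)·ρ'·(I ⊗ Π_k) and PTr_k(ρ') = ∑_{i ∈ F} w_i · (x_i x_i†) ⊗ (y_i y_i†). (That is, every separable operator admits a symmetric extension of every order k, so SEP ⊆ EXT_k.) -/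
open Matrix
open scoped Kronecker ComplexOrder

set_option maxHeartbeats 1000000

lemma prod_cons0 {d k : ℕ} (hk : 0 < k) (f : Fin d → ℂ) (b : Fin d) (r : Fin (k-1) → Fin d) :
    ∏ t : Fin k, f (cons0 b r t) = f b * ∏ t, f (r t) := by
  cases k with
  | zero => omega
  | succ m =>
    rw [Fin.prod_univ_succ]
    have h0 : cons0 b r (0 : Fin (m+1)) = b := by simp [cons0]
    have hs : ∀ t : Fin m, cons0 b r (Fin.succ t) = r t := by
      intro t
      simp only [cons0, Fin.val_succ, Nat.add_sub_cancel]
      norm_num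
    rw [h0]
    exact congrArg (fun p => f b * p)
      (Finset.prod_congr rfl fun t _ => by rw [hs t])

lemma sum_prod_pi (m d : ℕ) (g : Fin d → ℂ) :
    ∑ r : Fin m → Fin d, ∏ t, g (r t) = (∑ j, g j) ^ m := by
  classical
  calc ∑ r : Fin m → Fin d, ∏ t, g (r t)
      = ∑ r ∈ Fintype.piFinset (fun _ : Fin m => (Finset.univ : Finset (Fin d))),
          ∏ t, g (r t) := by rw [Fintype.piFinset_univ]
    _ = ∏ _t : Fin m, ∑ j, g j := (Finset.prod_univ_sum _ _).symm
    _ = (∑ j, g j) ^ m := by simp [Finset.prod_const, Finset.card_univ]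

lemma rank1_psd (n : Type) [Fintype n] (c : ℝ) (hc : 0 ≤ c) (z : n → ℂ) :
    Matrix.PosSemidef ((c : ℂ) • Matrix.vecMulVec z (star z)) := by
  refine Matrix.PosSemidef.of_dotProduct_mulVec_nonneg ?_ ?_
  · ext p q
    simp [Matrix.conjTranspose_apply, Matrix.vecMulVec_apply, Complex.conj_ofReal, mul_comm]
  · intro v
    set s : ℂ := star z ⬝ᵥ v with hs
    have h2 : (starRingEnd ℂ) s = ∑ p, (starRingEnd ℂ) (v p) * z p := by
      rw [hs, dotProduct, map_sum]; congr 1; ext p; simp [mul_comm]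
    have key : star v ⬝ᵥ ((c : ℂ) • Matrix.vecMulVec z (star z)) *ᵥ v
        = (c : ℂ) * ((starRingEnd ℂ) s * s) := by
      calc star v ⬝ᵥ ((c : ℂ) • Matrix.vecMulVec z (star z)) *ᵥ v
          = ∑ p, (starRingEnd ℂ) (v p) * ((c:ℂ) * (z p * ∑ q, (starRingEnd ℂ) (z q) * v q)) := by
            simp [dotProduct, Matrix.mulVec, Matrix.vecMulVec_apply, Finset.mul_sum]
            congr 1; ext p; congr 1; congr 1; ext q; ring
        _ = (c:ℂ) * ((∑ p, (starRingEnd ℂ) (v p) * z p) * ∑ q, (starRingEnd ℂ) (z q) * v q) := by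
            rw [Finset.sum_mul, Finset.mul_sum]; congr 1; ext p; ring
        _ = (c : ℂ) * ((starRingEnd ℂ) s * s) := by rw [h2]; simp [hs, dotProduct]
    rw [key, Complex.conj_mul']
    have : (c:ℂ) * (‖s‖:ℂ)^2 = ((c * ‖s‖^2 : ℝ) : ℂ) := by push_cast; ring
    rw [this]
    exact Complex.zero_le_real.mpr (by positivity)

theorem stmt4 (da d k : ℕ) (hda : 0 < da) (hd : 0 < d) (hk : 0 < k)
    (Q : Matrix (Fin k → Fin d) (Fin k → Fin d) ℂ)
    (hQH : Q.IsHermitian) (hQidem : Q * Q = Q)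
    (hQrange : LinearMap.range Q.mulVecLin = SymSpace d k)
    (F : Type) [Fintype F] (w : F → ℝ) (hw : ∀ i, 0 ≤ w i)
    (x : F → Fin da → ℂ) (y : F → Fin d → ℂ) :
    ∃ ρ' : Matrix (Fin da × (Fin k → Fin d)) (Fin da × (Fin k → Fin d)) ℂ,
      ρ'.PosSemidef ∧
      ρ' = ((1 : Matrix (Fin da) (Fin da) ℂ) ⊗ₖ Q) * ρ' * ((1 : Matrix (Fin da) (Fin da) ℂ) ⊗ₖ Q) ∧
      PTr da d k ρ' = ∑ i : F, ((w i : ℝ) : ℂ) •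
        (Matrix.vecMulVec (x i) (star (x i)) ⊗ₖ Matrix.vecMulVec (y i) (star (y i))) := by
  classical
  set Y : F → (Fin k → Fin d) → ℂ := fun i s => ∏ t, y i (s t) with hY
  set z : F → (Fin da × (Fin k → Fin d)) → ℂ := fun i p => x i p.1 * Y i p.2 with hz
  set n : F → ℝ := fun i => ∑ j, Complex.normSq (y i j) with hn
  have hn0 : ∀ i, 0 ≤ n i := fun i => Finset.sum_nonneg fun j _ => Complex.normSq_nonneg _
  set c : F → ℝ := fun i => w i / (n i) ^ (k - 1) with hc
  have hc0 : ∀ i, 0 ≤ c i := fun i => div_nonneg (hw i) (pow_nonneg (hn0 i) _)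
  set P : Matrix (Fin da × (Fin k → Fin d)) (Fin da × (Fin k → Fin d)) ℂ :=
    (1 : Matrix (Fin da) (Fin da) ℂ) ⊗ₖ Q with hP
  refine ⟨∑ i : F, ((c i : ℝ) : ℂ) • Matrix.vecMulVec (z i) (star (z i)), ?_, ?_, ?_⟩
  · exact Finset.sum_induction _ _ (fun a b ha hb => ha.add hb) .zero
      (fun i _ => rank1_psd _ (c i) (hc0 i) (z i))
  · -- invariance under P
    have hYsym : ∀ i, Y i ∈ SymSpace d k := by
      intro i s π
      exact Equiv.prod_comp π (fun t => y i (s t))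
    have hQY : ∀ i, Q *ᵥ Y i = Y i := by
      intro i
      have hmem := hYsym i
      rw [← hQrange, LinearMap.mem_range] at hmem
      obtain ⟨u, hu⟩ := hmem
      have hu' : Q *ᵥ u = Y i := by rwa [Matrix.mulVecLin_apply] at hu
      conv_lhs => rw [← hu', Matrix.mulVec_mulVec, hQidem, hu']
    have hPz : ∀ i, P *ᵥ z i = z i := by
      intro i
      ext ⟨a, s⟩
      have : (P *ᵥ z i) (a, s) = ∑ p : Fin da × (Fin k → Fin d),
          (1 : Matrix (Fin da) (Fin da) ℂ) a p.1 * Q s p.2 * (x i p.1 * Y i p.2) := rfl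
      rw [this, Fintype.sum_prod_type]
      simp only [Matrix.one_apply, ite_mul, one_mul, zero_mul]
      rw [Finset.sum_comm]
      simp only [Finset.sum_ite_eq, Finset.mem_univ, if_true]
      have : ∑ s', Q s s' * (x i a * Y i s') = x i a * ∑ s', Q s s' * Y i s' := by
        rw [Finset.mul_sum]; congr 1; ext s'; ring
      rw [this]
      have hYs : ∑ s', Q s s' * Y i s' = Y i s := congrFun (hQY i) s
      rw [hYs]
    have hPH : Pᴴ = P := by
      ext ⟨a, s⟩ ⟨a', s'⟩
      show star ((1 : Matrix (Fin da) (Fin da) ℂ) a' a * Q s' s)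
          = (1 : Matrix (Fin da) (Fin da) ℂ) a a' * Q s s'
      calc star ((1 : Matrix (Fin da) (Fin da) ℂ) a' a * Q s' s)
          = star (Q s' s) * star ((1 : Matrix (Fin da) (Fin da) ℂ) a' a) := star_mul _ _
        _ = Qᴴ s s' * (1 : Matrix (Fin da) (Fin da) ℂ)ᴴ a a' := rfl
        _ = Q s s' * (1 : Matrix (Fin da) (Fin da) ℂ) a a' := by
              rw [hQH.eq, Matrix.conjTranspose_one]
        _ = (1 : Matrix (Fin da) (Fin da) ℂ) a a' * Q s s' := mul_comm _ _
    have hPzz : ∀ i, P * Matrix.vecMulVec (z i) (star (z i)) * P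
        = Matrix.vecMulVec (z i) (star (z i)) := by
      intro i
      have hrow : star (z i) ᵥ* P = star (z i) := by
        rw [← hPH, ← Matrix.star_mulVec, hPz]
      ext p q
      rw [Matrix.mul_apply]
      have h1 : ∀ q, (P * Matrix.vecMulVec (z i) (star (z i))) p q
          = z i p * star (z i) q := by
        intro q
        rw [Matrix.mul_apply]
        have : ∑ r, P p r * Matrix.vecMulVec (z i) (star (z i)) r q
            = (∑ r, P p r * z i r) * star (z i) q := by
          rw [Finset.sum_mul]; congr 1; ext r; rw [Matrix.vecMulVec_apply]; ring
        rw [this]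
        have : ∑ r, P p r * z i r = (P *ᵥ z i) p := rfl
        rw [this, hPz]
      simp only [h1]
      have : ∑ r, z i p * star (z i) r * P r q = z i p * ∑ r, star (z i) r * P r q := by
        rw [Finset.mul_sum]; congr 1; ext r; ring
      rw [this]
      have : ∑ r, star (z i) r * P r q = (star (z i) ᵥ* P) q := rfl
      rw [this, hrow, Matrix.vecMulVec_apply]
    rw [Matrix.mul_sum, Matrix.sum_mul]
    refine Finset.sum_congr rfl fun i _ => ?_
    rw [Matrix.mul_smul, Matrix.smul_mul, hPzz i]
  · -- partial trace
    ext ⟨a, b⟩ ⟨a', b'⟩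
    simp only [PTr, Matrix.sum_apply, Matrix.smul_apply, Matrix.vecMulVec_apply,
      smul_eq_mul, Matrix.kroneckerMap_apply, Pi.star_apply]
    rw [Finset.sum_comm]
    refine Finset.sum_congr rfl fun i _ => ?_
    by_cases hni : n i = 0
    · have hy0 : ∀ j, y i j = 0 := by
        intro j
        have h := (Finset.sum_eq_zero_iff_of_nonneg
          (fun j _ => Complex.normSq_nonneg (y i j))).mp hni j (Finset.mem_univ j)
        exact Complex.normSq_eq_zero.mp h
      have hprod : ∀ s : Fin k → Fin d, Y i s = 0 := by
        intro s
        simp [hY, hy0, Finset.prod_const, zero_pow hk.ne']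
      simp [hz, hprod, hy0]
    · have hterm : ∀ r : Fin (k-1) → Fin d,
          z i (a, cons0 b r) * star (z i (a', cons0 b' r))
          = (x i a * star (x i a') * (y i b * star (y i b'))) *
              ∏ t, (y i (r t) * star (y i (r t))) := by
        intro r
        simp only [hz, hY]
        rw [prod_cons0 hk, prod_cons0 hk, star_mul', star_mul', star_prod]
        conv_rhs => rw [Finset.prod_mul_distrib]
        ring
      have hsum : ∑ r : Fin (k-1) → Fin d, ((c i : ℝ) : ℂ) *
            (z i (a, cons0 b r) * star (z i (a', cons0 b' r)))
          = ((c i : ℝ) : ℂ) * ((x i a * star (x i a') * (y i b * star (y i b'))) *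
              ((n i : ℝ) : ℂ) ^ (k - 1)) := by
        have h1 : ∑ j, y i j * star (y i j) = ((n i : ℝ) : ℂ) := by
          rw [hn]
          push_cast
          refine Finset.sum_congr rfl fun j _ => ?_
          rw [← Complex.mul_conj]
          rfl
        rw [← Finset.mul_sum]
        congr 1
        calc ∑ r : Fin (k-1) → Fin d, z i (a, cons0 b r) * star (z i (a', cons0 b' r))
            = ∑ r : Fin (k-1) → Fin d, (x i a * star (x i a') * (y i b * star (y i b'))) *
                ∏ t, (y i (r t) * star (y i (r t))) := Finset.sum_congr rfl fun r _ => hterm r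
          _ = (x i a * star (x i a') * (y i b * star (y i b'))) *
                ∑ r : Fin (k-1) → Fin d, ∏ t, (y i (r t) * star (y i (r t))) := by
              rw [Finset.mul_sum]
          _ = _ := by rw [sum_prod_pi (k-1) d (fun j => y i j * star (y i j)), h1]
      rw [hsum]
      have hcw : ((c i : ℝ) : ℂ) * ((n i : ℝ) : ℂ) ^ (k - 1) = ((w i : ℝ) : ℂ) := by
        rw [← Complex.ofReal_pow, ← Complex.ofReal_mul]
        congr 1
        rw [hc]
        exact div_mul_cancel₀ (w i) (pow_ne_zero _ hni)
      calc ((c i : ℝ) : ℂ) * ((x i a * star (x i a') * (y i b * star (y i b'))) *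
              ((n i : ℝ) : ℂ) ^ (k - 1))
          = (((c i : ℝ) : ℂ) * ((n i : ℝ) : ℂ) ^ (k - 1)) *
              (x i a * star (x i a') * (y i b * star (y i b'))) := by ring
        _ = ((w i : ℝ) : ℂ) * (x i a * star (x i a') * (y i b * star (y i b'))) := by
              rw [hcw]
end

section
/- Let ρ be a PSD matrix indexed by (Fin d_a) × (Fin d) with trace 1. Then for every matrix X indexed by (Fin d_a) × J_k that is PSD with trace 1 and every Hermitian matrix u indexed by (Fin d_a) × (Fin d), one has (1/2)·‖A(X) − ρ‖² + (1/2)·‖u‖² + Re(Tr(ρ·u)) + λmax(−A†(u)) ≥ 0 (weak duality / nonnegativity of the duality gap for the EXT least-squares primal-dual pair). -/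
open Matrix
open scoped Kronecker ComplexOrder

section Aux

open Matrix

variable {da d k : ℕ}

lemma cons0_zero (b : Fin d) (r : Fin (k - 1) → Fin d) (h : 0 < k) :
    cons0 b r ⟨0, h⟩ = b := by simp [cons0]

lemma cons0_succ (b : Fin d) (r : Fin (k - 1) → Fin d) (s : Fin (k - 1))
    (h : (s : ℕ) + 1 < k) : cons0 b r ⟨(s : ℕ) + 1, h⟩ = r s := by
  simp [cons0]

/-- Splitting a pair-with-`k`-tuple as (pair-with-head, tail). -/
def splitEquiv2 (da d k : ℕ) (hk : 0 < k) :
    ((Fin da × Fin d) × (Fin (k - 1) → Fin d)) ≃ (Fin da × (Fin k → Fin d)) where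
  toFun x := (x.1.1, cons0 x.1.2 x.2)
  invFun P := ((P.1, P.2 ⟨0, hk⟩), fun s => P.2 ⟨(s : ℕ) + 1, by have := s.isLt; omega⟩)
  left_inv := by
    rintro ⟨⟨a, b⟩, r⟩
    refine Prod.ext (Prod.ext rfl ?_) ?_
    · exact cons0_zero b r hk
    · funext s; exact cons0_succ b r s (by have := s.isLt; omega)
  right_inv := by
    rintro ⟨a, i⟩
    refine Prod.ext rfl ?_
    funext s
    unfold cons0
    by_cases h : (s : ℕ) = 0
    · simp only [dif_pos h]
      congr 1
      exact Fin.ext h.symm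
    · simp only [dif_neg h]
      congr 1
      apply Fin.ext
      simp
      omega

lemma trace_PTr_mul (da d k : ℕ) (hk : 0 < k)
    (M : Matrix (Fin da × (Fin k → Fin d)) (Fin da × (Fin k → Fin d)) ℂ)
    (W : Matrix (Fin da × Fin d) (Fin da × Fin d) ℂ) :
    ((PTr da d k M) * W).trace = (M * Emat da d k hk W).trace := by
  classical
  set e := splitEquiv2 da d k hk with he
  have hEq : ∀ (p q : Fin da × Fin d) (r r' : Fin (k - 1) → Fin d),
      Emat da d k hk W (e (q, r')) (e (p, r)) = if r' = r then W q p else 0 := by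
    intro p q r r'
    unfold Emat
    have hc : (∀ s : Fin (k - 1),
        (e (q, r')).2 ⟨(s : ℕ) + 1, by have := s.isLt; omega⟩ =
          (e (p, r)).2 ⟨(s : ℕ) + 1, by have := s.isLt; omega⟩) ↔ r' = r := by
      constructor
      · intro h; funext s
        have := h s
        simpa [he, splitEquiv2, cons0_succ] using this
      · intro h s
        simp [he, splitEquiv2, cons0_succ, h]
    rw [if_congr hc rfl rfl]
    congr 1 <;> simp [he, splitEquiv2, cons0_zero]
  -- rewrite right side trace
  rw [Matrix.trace, Matrix.trace]
  simp only [Matrix.diag, Matrix.mul_apply]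
  rw [← Equiv.sum_comp e (fun P => ∑ Q, M P Q * Emat da d k hk W Q P)]
  conv_rhs => rw [Fintype.sum_prod_type]
  refine Finset.sum_congr rfl fun p _ => ?_
  have hinner : ∀ r, (∑ Q, M (e (p, r)) Q * Emat da d k hk W Q (e (p, r)))
      = ∑ q, M (e (p, r)) (e (q, r)) * W q p := by
    intro r
    rw [← Equiv.sum_comp e
      (fun Q => M (e (p, r)) Q * Emat da d k hk W Q (e (p, r)))]
    conv_lhs => rw [Fintype.sum_prod_type]
    refine Finset.sum_congr rfl fun q _ => ?_
    calc ∑ r', M (e (p, r)) (e (q, r')) * Emat da d k hk W (e (q, r')) (e (p, r))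
        = ∑ r', if r' = r then M (e (p, r)) (e (q, r')) * W q p else 0 := by
          refine Finset.sum_congr rfl fun r' _ => ?_
          rw [hEq p q r r', mul_ite, mul_zero]
      _ = M (e (p, r)) (e (q, r)) * W q p := by
          rw [Finset.sum_ite_eq' Finset.univ r
            (fun r' => M (e (p, r)) (e (q, r')) * W q p)]
          simp
  calc ∑ q, PTr da d k M p q * W q p
      = ∑ q, ∑ r, M (p.1, cons0 p.2 r) (q.1, cons0 q.2 r) * W q p := by
        refine Finset.sum_congr rfl fun q _ => ?_
        rw [PTr, Finset.sum_mul]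
    _ = ∑ r, ∑ q, M (p.1, cons0 p.2 r) (q.1, cons0 q.2 r) * W q p := Finset.sum_comm
    _ = ∑ r, ∑ q, M (e (p, r)) (e (q, r)) * W q p := rfl
    _ = ∑ r, ∑ Q, M (e (p, r)) Q * Emat da d k hk W Q (e (p, r)) :=
        Finset.sum_congr rfl fun r _ => (hinner r).symm

lemma trace_amap_adjoint (da d k : ℕ) (hk : 0 < k)
    (X : Matrix (Fin da × Jk d k) (Fin da × Jk d k) ℂ)
    (u : Matrix (Fin da × Fin d) (Fin da × Fin d) ℂ) :
    ((Amap da d k X) * u).trace = (X * Adag da d k hk u).trace := by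
  unfold Amap Adag
  rw [trace_PTr_mul da d k hk]
  set K := ((1 : Matrix (Fin da) (Fin da) ℂ) ⊗ₖ Pmat d k)
  set E := Emat da d k hk u
  calc (K * X * Kᴴ * E).trace = (K * (X * Kᴴ * E)).trace := by
        simp only [Matrix.mul_assoc]
    _ = ((X * Kᴴ * E) * K).trace := Matrix.trace_mul_comm _ _
    _ = (X * (Kᴴ * E * K)).trace := by simp only [Matrix.mul_assoc]

lemma re_trace_mul_le_half {n : Type*} [Fintype n]
    (B u : Matrix n n ℂ) :
    ((B * u).trace).re ≤ 1 / 2 * frobSq B + 1 / 2 * frobSq u := by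
  classical
  have h1 : ((B * u).trace).re = ∑ p, ∑ q, (B p q * u q p).re := by
    rw [Matrix.trace]
    simp only [Matrix.diag, Matrix.mul_apply]
    rw [Complex.re_sum]
    exact Finset.sum_congr rfl fun p _ => Complex.re_sum _ _
  rw [h1]
  have h2 : ∀ p q : n, (B p q * u q p).re ≤
      1 / 2 * ‖B p q‖ ^ 2 + 1 / 2 * ‖u q p‖ ^ 2 := by
    intro p q
    have h3 : (B p q * u q p).re ≤ ‖B p q * u q p‖ := Complex.re_le_norm _
    rw [norm_mul] at h3
    nlinarith [sq_nonneg (‖B p q‖ - ‖u q p‖),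
      norm_nonneg (B p q), norm_nonneg (u q p)]
  calc ∑ p, ∑ q, (B p q * u q p).re
      ≤ ∑ p, ∑ q, (1 / 2 * ‖B p q‖ ^ 2 + 1 / 2 * ‖u q p‖ ^ 2) :=
        Finset.sum_le_sum fun p _ => Finset.sum_le_sum fun q _ => h2 p q
    _ = 1 / 2 * frobSq B + 1 / 2 * frobSq u := by
        simp only [Finset.sum_add_distrib, ← Finset.mul_sum, frobSq]
        congr 1
        rw [Finset.sum_comm]

lemma re_trace_mul_le_lamMax {n : Type*} [Fintype n] [DecidableEq n]
    (X M : Matrix n n ℂ) (hX : X.PosSemidef) (hXtr : X.trace = 1)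
    (hM : M.IsHermitian) : ((X * M).trace).re ≤ lamMax hM := by
  classical
  set U : Matrix n n ℂ := (Matrix.IsHermitian.eigenvectorUnitary hM : Matrix n n ℂ) with hU
  have hsp := hM.spectral_theorem
  rw [Unitary.conjStarAlgAut_apply] at hsp
  rw [← hU] at hsp
  set f : n → ℝ := hM.eigenvalues with hf
  set Y : Matrix n n ℂ := star U * X * U with hYdef
  have hY : Y.PosSemidef := by
    exact hX.conjTranspose_mul_mul_same U
  have hUU : U * star U = 1 :=
    (Matrix.mem_unitaryGroup_iff).mp (Matrix.IsHermitian.eigenvectorUnitary hM).2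
  have hYtr : Y.trace = 1 := by
    rw [hYdef, Matrix.trace_mul_comm, ← Matrix.mul_assoc, hUU, Matrix.one_mul, hXtr]
  have hdiag : ∀ i, 0 ≤ (Y i i).re := by
    intro i
    have h := hY.re_dotProduct_nonneg (Pi.single i 1)
    simpa [dotProduct, Matrix.mulVec, Pi.single_apply, mul_ite, ite_mul,
      apply_ite, Finset.sum_ite_eq, RCLike.re_to_complex] using h
  have htr : (X * M).trace = ∑ i, Y i i * (f i : ℂ) := by
    calc (X * M).trace
        = (X * (U * diagonal (RCLike.ofReal ∘ f) * star U)).trace := by rw [← hsp]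
      _ = (X * (U * diagonal (RCLike.ofReal ∘ f)) * star U).trace := by
          simp only [Matrix.mul_assoc]
      _ = (star U * (X * (U * diagonal (RCLike.ofReal ∘ f)))).trace :=
          (Matrix.trace_mul_comm _ _)
      _ = (Y * diagonal (RCLike.ofReal ∘ f)).trace := by
          rw [hYdef]; simp only [Matrix.mul_assoc]
      _ = ∑ i, Y i i * (f i : ℂ) := by
          rw [Matrix.trace]
          simp [Matrix.diag, Matrix.mul_diagonal, Function.comp]
  have hbdd : BddAbove (Set.range hM.eigenvalues) := Set.Finite.bddAbove (Set.finite_range _)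
  have hle : ∀ i, f i ≤ lamMax hM := fun i => le_ciSup hbdd i
  have h1 : ((X * M).trace).re = ∑ i, (Y i i).re * f i := by
    rw [htr, Complex.re_sum]
    refine Finset.sum_congr rfl fun i _ => ?_
    simp [Complex.mul_re]
  rw [h1]
  have hsum : ∑ i, (Y i i).re = 1 := by
    have h0 : (Y.trace).re = 1 := by rw [hYtr]; simp
    rw [Matrix.trace, Complex.re_sum] at h0
    exact h0
  calc ∑ i, (Y i i).re * f i
      ≤ ∑ i, (Y i i).re * lamMax hM :=
        Finset.sum_le_sum fun i _ => mul_le_mul_of_nonneg_left (hle i) (hdiag i)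
    _ = lamMax hM := by rw [← Finset.sum_mul, hsum, one_mul]

end Aux

theorem stmt12 (da d k : ℕ) (hda : 0 < da) (hd : 0 < d) (hk : 0 < k)
    (ρ : Matrix (Fin da × Fin d) (Fin da × Fin d) ℂ)
    (hρ : ρ.PosSemidef) (hρtr : ρ.trace = 1)
    (X : Matrix (Fin da × Jk d k) (Fin da × Jk d k) ℂ)
    (hX : X.PosSemidef) (hXtr : X.trace = 1)
    (u : Matrix (Fin da × Fin d) (Fin da × Fin d) ℂ) (hu : u.IsHermitian)
    (hnegH : (-(Adag da d k hk u)).IsHermitian) :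
    0 ≤ (1 / 2) * frobSq (Amap da d k X - ρ) + (1 / 2) * frobSq u +
          ((ρ * u).trace).re + lamMax hnegH := by
  set B := Amap da d k X - ρ with hB
  set M := -(Adag da d k hk u) with hM
  have hadj : ((Amap da d k X) * u).trace = (X * Adag da d k hk u).trace :=
    trace_amap_adjoint da d k hk X u
  have hsplit : ((ρ * u).trace).re =
      ((X * Adag da d k hk u).trace).re - ((B * u).trace).re := by
    have : ρ * u = Amap da d k X * u - B * u := by
      rw [hB, Matrix.sub_mul]; abel
    rw [this, Matrix.trace_sub, Complex.sub_re, hadj]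
  have hXM : (X * M).trace = -(X * Adag da d k hk u).trace := by
    rw [hM, Matrix.mul_neg, Matrix.trace_neg]
  have hlam : ((X * M).trace).re ≤ lamMax hnegH :=
    re_trace_mul_le_lamMax X M hX hXtr hnegH
  have hcs : ((B * u).trace).re ≤ 1 / 2 * frobSq B + 1 / 2 * frobSq u :=
    re_trace_mul_le_half B u
  have hXMre : ((X * M).trace).re = -((X * Adag da d k hk u).trace).re := by
    rw [hXM, Complex.neg_re]
  linarith
end

section
/- For all integers d ≥ 2 and k ≥ 1, the following identity holds in ℕ: ∑_{ℓ=1}^{k} ℓ² · ⟨d−1⟩_{k−ℓ} = ∑_{ℓ₀=1}^{k} ∑_{ℓ₁=1}^{k+1−ℓ₀} ℓ₀ · ℓ₁ · ⟨d−2⟩_{k+1−ℓ₀−ℓ₁} + ∑_{ℓ₀=1}^{k−1} ∑_{ℓ₁=1}^{k−ℓ₀} ℓ₀ · ℓ₁ · ⟨d−2⟩_{k−ℓ₀−ℓ₁} (i.e., a_k = b_k + c_k after multiplying through by k²). -/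
open Finset

/-- `mset x t` is the number of multisets of size `t` from `x` symbols,
`⟨x⟩_t = Nat.choose (x + t - 1) t`. -/
def mset (x t : ℕ) : ℕ := Nat.choose (x + t - 1) t

lemma mset_succ (n t : ℕ) : mset (n+1) t = ∑ s ∈ range (t+1), mset n s := by
  induction t with
  | zero => simp [mset]
  | succ t ih =>
    rw [Finset.sum_range_succ, ← ih]
    unfold mset
    rw [show n + 1 + (t+1) - 1 = (n+t) + 1 by omega,
        show n + 1 + t - 1 = n + t by omega,
        show n + (t+1) - 1 = n + t by omega,
        Nat.choose_succ_succ]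

lemma reindexL (g : ℕ → ℕ) (l k : ℕ) (h : l ≤ k) :
    ∑ s ∈ range (k - l + 1), g s = ∑ m ∈ Icc l k, g (k - m) := by
  apply Finset.sum_nbij' (i := fun s => k - s) (j := fun m => k - m)
  · intro a ha; simp only [mem_range] at ha; simp only [mem_Icc]; omega
  · intro a ha; simp only [mem_Icc] at ha; simp only [mem_range]; omega
  · intro a ha; simp only [mem_range] at ha; omega
  · intro a ha; simp only [mem_Icc] at ha; omega
  · intro a ha; simp only [mem_range] at ha
    congr 1; omega

lemma reindexB (g : ℕ → ℕ) (l0 k : ℕ) (h1 : 1 ≤ l0) (h : l0 ≤ k) :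
    ∑ l1 ∈ Icc 1 (k+1-l0), l0 * l1 * g (k+1-l0-l1)
      = ∑ m ∈ Icc l0 k, l0 * (m+1-l0) * g (k-m) := by
  apply Finset.sum_nbij' (i := fun l1 => l0 + l1 - 1) (j := fun m => m + 1 - l0)
  · intro a ha; simp only [mem_Icc] at *; omega
  · intro a ha; simp only [mem_Icc] at *; omega
  · intro a ha; simp only [mem_Icc] at ha; omega
  · intro a ha; simp only [mem_Icc] at ha; omega
  · intro a ha; simp only [mem_Icc] at ha
    congr 2 <;> omega

lemma reindexC (g : ℕ → ℕ) (l0 k : ℕ) (h1 : 1 ≤ l0) (h : l0 ≤ k - 1) :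
    ∑ l1 ∈ Icc 1 (k-l0), l0 * l1 * g (k-l0-l1)
      = ∑ m ∈ Icc (l0+1) k, l0 * (m-l0) * g (k-m) := by
  apply Finset.sum_nbij' (i := fun l1 => l0 + l1) (j := fun m => m - l0)
  · intro a ha; simp only [mem_Icc] at *; omega
  · intro a ha; simp only [mem_Icc] at *; omega
  · intro a ha; simp only [mem_Icc] at ha; omega
  · intro a ha; simp only [mem_Icc] at ha; omega
  · intro a ha; simp only [mem_Icc] at ha
    congr 2 <;> omega

lemma commB (F : ℕ → ℕ → ℕ) (k : ℕ) :
    ∑ l ∈ Icc 1 k, ∑ m ∈ Icc l k, F l m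
      = ∑ m ∈ Icc 1 k, ∑ l ∈ Icc 1 m, F l m := by
  apply Finset.sum_comm'
  intro l m; simp only [mem_Icc]; omega

lemma commC (F : ℕ → ℕ → ℕ) (k : ℕ) :
    ∑ l ∈ Icc 1 (k-1), ∑ m ∈ Icc (l+1) k, F l m
      = ∑ m ∈ Icc 1 k, ∑ l ∈ Icc 1 (m-1), F l m := by
  apply Finset.sum_comm'
  intro l m; simp only [mem_Icc]; omega

def Gs (m : ℕ) : ℕ := ∑ l ∈ Icc 1 m, l
def Ts (m : ℕ) : ℕ := ∑ l ∈ Icc 1 m, l * (m + 1 - l)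
def S2 (m : ℕ) : ℕ := ∑ l ∈ Icc 1 m, l ^ 2

lemma hG : ∀ m, Gs (m+1) + Gs m = (m+1)^2 := by
  intro m
  induction m with
  | zero => simp [Gs]
  | succ m ih =>
    have h1 : Gs (m+2) = Gs (m+1) + (m+2) := by
      unfold Gs; rw [Finset.sum_Icc_succ_top (by omega)]
    have h2 : Gs (m+1) = Gs m + (m+1) := by
      unfold Gs; rw [Finset.sum_Icc_succ_top (by omega)]
    rw [h1, h2]
    rw [h2] at ih
    ring_nf at ih ⊢
    linarith

lemma hT (m : ℕ) : Ts (m+1) = Ts m + Gs (m+1) := by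
  unfold Ts Gs
  rw [show (∑ l ∈ Icc 1 (m+1), l * (m+1+1-l)) = ∑ l ∈ Icc 1 (m+1), (l * (m+1-l) + l) from
    Finset.sum_congr rfl (fun l hl => by
      simp only [mem_Icc] at hl
      rw [show m+1+1-l = (m+1-l)+1 by omega]; ring)]
  rw [Finset.sum_add_distrib, Finset.sum_Icc_succ_top (by omega : 1 ≤ m+1)]
  simp

lemma key : ∀ m, S2 (m+1) = Ts (m+1) + Ts m := by
  intro m
  induction m with
  | zero => simp [S2, Ts]
  | succ m ih =>
    have h1 : S2 (m+2) = S2 (m+1) + (m+2)^2 := by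
      unfold S2; rw [Finset.sum_Icc_succ_top (by omega)]
    rw [h1, ih, hT (m+1), hT m, ← hG (m+1)]
    ring

theorem stmt16 (d k : ℕ) (hd : 2 ≤ d) (hk : 1 ≤ k) :
    ∑ l ∈ Finset.Icc 1 k, l ^ 2 * mset (d - 1) (k - l) =
      (∑ l0 ∈ Finset.Icc 1 k, ∑ l1 ∈ Finset.Icc 1 (k + 1 - l0),
          l0 * l1 * mset (d - 2) (k + 1 - l0 - l1)) +
      ∑ l0 ∈ Finset.Icc 1 (k - 1), ∑ l1 ∈ Finset.Icc 1 (k - l0),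
          l0 * l1 * mset (d - 2) (k - l0 - l1) := by
  obtain ⟨n, rfl⟩ : ∃ n, d = n + 2 := ⟨d - 2, by omega⟩
  rw [show n + 2 - 1 = n + 1 by omega, show n + 2 - 2 = n by omega]
  have hL : ∑ l ∈ Icc 1 k, l ^ 2 * mset (n+1) (k - l)
      = ∑ m ∈ Icc 1 k, S2 m * mset n (k - m) := by
    calc ∑ l ∈ Icc 1 k, l ^ 2 * mset (n+1) (k - l)
        = ∑ l ∈ Icc 1 k, ∑ m ∈ Icc l k, l ^ 2 * mset n (k - m) := by
          refine Finset.sum_congr rfl fun l hl => ?_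
          simp only [mem_Icc] at hl
          rw [mset_succ, reindexL _ l k hl.2, Finset.mul_sum]
      _ = ∑ m ∈ Icc 1 k, ∑ l ∈ Icc 1 m, l ^ 2 * mset n (k - m) := commB _ k
      _ = ∑ m ∈ Icc 1 k, S2 m * mset n (k - m) := by
          refine Finset.sum_congr rfl fun m hm => ?_
          simp only [S2]; rw [Finset.sum_mul]
  have hB : (∑ l0 ∈ Icc 1 k, ∑ l1 ∈ Icc 1 (k+1-l0), l0 * l1 * mset n (k+1-l0-l1))
      = ∑ m ∈ Icc 1 k, Ts m * mset n (k - m) := by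
    calc (∑ l0 ∈ Icc 1 k, ∑ l1 ∈ Icc 1 (k+1-l0), l0 * l1 * mset n (k+1-l0-l1))
        = ∑ l0 ∈ Icc 1 k, ∑ m ∈ Icc l0 k, l0 * (m+1-l0) * mset n (k-m) := by
          refine Finset.sum_congr rfl fun l0 hl => ?_
          simp only [mem_Icc] at hl
          exact reindexB _ l0 k hl.1 hl.2
      _ = ∑ m ∈ Icc 1 k, ∑ l0 ∈ Icc 1 m, l0 * (m+1-l0) * mset n (k-m) := commB _ k
      _ = ∑ m ∈ Icc 1 k, Ts m * mset n (k - m) := by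
          refine Finset.sum_congr rfl fun m hm => ?_
          simp only [Ts]; rw [Finset.sum_mul]
  have hC : (∑ l0 ∈ Icc 1 (k-1), ∑ l1 ∈ Icc 1 (k-l0), l0 * l1 * mset n (k-l0-l1))
      = ∑ m ∈ Icc 1 k, Ts (m-1) * mset n (k - m) := by
    calc (∑ l0 ∈ Icc 1 (k-1), ∑ l1 ∈ Icc 1 (k-l0), l0 * l1 * mset n (k-l0-l1))
        = ∑ l0 ∈ Icc 1 (k-1), ∑ m ∈ Icc (l0+1) k, l0 * (m-l0) * mset n (k-m) := by
          refine Finset.sum_congr rfl fun l0 hl => ?_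
          simp only [mem_Icc] at hl
          exact reindexC _ l0 k hl.1 hl.2
      _ = ∑ m ∈ Icc 1 k, ∑ l0 ∈ Icc 1 (m-1), l0 * (m-l0) * mset n (k-m) := commC _ k
      _ = ∑ m ∈ Icc 1 k, Ts (m-1) * mset n (k - m) := by
          refine Finset.sum_congr rfl fun m hm => ?_
          simp only [mem_Icc] at hm
          simp only [Ts]; rw [Finset.sum_mul]
          refine Finset.sum_congr rfl fun l hl => ?_
          simp only [mem_Icc] at hl
          congr 2
          omega
  rw [hL, hB, hC, ← Finset.sum_add_distrib]
  refine Finset.sum_congr rfl fun m hm => ?_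
  simp only [mem_Icc] at hm
  obtain ⟨m', rfl⟩ : ∃ m', m = m' + 1 := ⟨m - 1, by omega⟩
  rw [key m', Nat.add_sub_cancel, add_mul]
end

section
/- For all integers d ≥ 2, k ≥ 2 and n with 2 ≤ n ≤ k, the following identity holds in ℤ: ∑_{ℓ=1}^{n} ℓ² · ⟨d−1⟩_{k−ℓ} − ∑_{ℓ=1}^{n} C(ℓ+2, 3) · (⟨d−2⟩_{k−ℓ} + ⟨d−2⟩_{k−1−ℓ}) = C(n+1, 3) · ⟨d−1⟩_{k−n−1} + C(n+2, 3) · ⟨d−1⟩_{k−n−2}, where C(m, 3) = Nat.choose m 3 (so C(ℓ+2,3) = ℓ(ℓ+1)(ℓ+2)/6, C(n+1,3) = (n−1)n(n+1)/6, and C(n+2,3) = n(n+1)(n+2)/6). -/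
/-- `⟨x⟩_t` for integer `t`, equal to `0` for `t < 0`. -/
def msetZ (x : ℕ) (t : ℤ) : ℤ := if t < 0 then 0 else (mset x t.toNat : ℤ)

lemma msetZ_rec (x : ℕ) (hx : 1 ≤ x) (t : ℤ) :
    msetZ x t = msetZ (x - 1) t + msetZ x (t - 1) := by
  obtain ⟨a, rfl⟩ := Nat.exists_eq_add_of_le hx
  unfold msetZ
  rcases lt_or_ge t 0 with h | h
  · simp [h, show t - 1 < 0 by omega]
  · obtain ⟨m, rfl⟩ := Int.eq_ofNat_of_zero_le h
    cases m with
    | zero => simp [mset]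
    | succ m =>
      have h1 : ¬ ((m + 1 : ℕ) : ℤ) < 0 := by omega
      have h2 : ¬ ((m + 1 : ℕ) : ℤ) - 1 < 0 := by omega
      have h3 : (((m + 1 : ℕ) : ℤ)).toNat = m + 1 := by omega
      have h4 : (((m + 1 : ℕ) : ℤ) - 1).toNat = m := by omega
      simp only [if_neg h1, if_neg h2, h3, h4]
      have e1 : mset (1 + a) (m + 1) = Nat.choose (a + m + 1) (m + 1) := by
        unfold mset; congr 1; omega
      have e2 : mset (1 + a - 1) (m + 1) = Nat.choose (a + m) (m + 1) := by
        unfold mset; congr 1; omega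
      have e3 : mset (1 + a) m = Nat.choose (a + m) m := by
        unfold mset; congr 1; omega
      rw [e1, e2, e3]
      push_cast [Nat.choose_succ_succ (a + m) m]
      ring

lemma ch3 (n : ℕ) : (n+3).choose 3 = (n+1)^2 + (n+1).choose 3 := by
  induction n with
  | zero => decide
  | succ m ih =>
    have a1 : (m+4).choose 3 = (m+3).choose 2 + (m+3).choose 3 := Nat.choose_succ_succ _ _
    have a3 : (m+3).choose 2 = (m+2).choose 1 + (m+2).choose 2 := Nat.choose_succ_succ _ _
    have a4 : (m+2).choose 2 = (m+1).choose 1 + (m+1).choose 2 := Nat.choose_succ_succ _ _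
    have a2 : (m+1+3).choose 3 = (m+3).choose 2 + (m+3).choose 3 := by norm_num [a1]
    have a5 : (m+2).choose 1 = m+2 := Nat.choose_one_right _
    have a6 : (m+1).choose 1 = m+1 := Nat.choose_one_right _
    have sq : (m+1+1)^2 = (m+1)^2 + (2*m+3) := by ring
    have a8 : (m+2).choose 3 = (m+1).choose 2 + (m+1).choose 3 := Nat.choose_succ_succ _ _
    linarith

lemma key_s17 (d k n : ℕ) (hd : 2 ≤ d) (hn : 1 ≤ n) :
    (∑ l ∈ Finset.Icc 1 n, (l : ℤ) ^ 2 * msetZ (d - 1) ((k : ℤ) - l)) -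
      ∑ l ∈ Finset.Icc 1 n, (Nat.choose (l + 2) 3 : ℤ) *
        (msetZ (d - 2) ((k : ℤ) - l) + msetZ (d - 2) ((k : ℤ) - 1 - l)) =
    (Nat.choose (n + 1) 3 : ℤ) * msetZ (d - 1) ((k : ℤ) - n - 1) +
      (Nat.choose (n + 2) 3 : ℤ) * msetZ (d - 1) ((k : ℤ) - n - 2) := by
  have hsub : d - 1 - 1 = d - 2 := by omega
  have hd1 : 1 ≤ d - 1 := by omega
  induction n, hn using Nat.le_induction with
  | base =>
    simp only [Finset.Icc_self, Finset.sum_singleton]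
    have r1 := msetZ_rec (d - 1) hd1 ((k : ℤ) - 1)
    have r2 := msetZ_rec (d - 1) hd1 ((k : ℤ) - 1 - 1)
    rw [hsub] at r1 r2
    have e1 : (k : ℤ) - 1 - 1 - 1 = (k : ℤ) - 1 - 2 := by ring
    rw [e1] at r2
    norm_num
    linarith
  | succ n hn ih =>
    rw [Finset.sum_Icc_succ_top (by omega : 1 ≤ n + 1),
        Finset.sum_Icc_succ_top (by omega : 1 ≤ n + 1)]
    have r1 := msetZ_rec (d - 1) hd1 ((k : ℤ) - (n + 1))
    have r2 := msetZ_rec (d - 1) hd1 ((k : ℤ) - (n + 1) - 1)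
    rw [hsub] at r1 r2
    have f0 : (k : ℤ) - ((n:ℤ) + 1) = (k : ℤ) - n - 1 := by ring
    have f1 : (k : ℤ) - ((n:ℤ) + 1) - 1 = (k : ℤ) - n - 2 := by ring
    have f2 : (k : ℤ) - ((n:ℤ) + 1) - 1 - 1 = (k : ℤ) - n - 3 := by ring
    rw [f1, f0] at r1
    rw [f2, f1] at r2
    have g3 : (k : ℤ) - ((n + 1 : ℕ) : ℤ) - 2 = (k : ℤ) - n - 3 := by push_cast; ring
    have g1 : (k : ℤ) - ((n + 1 : ℕ) : ℤ) - 1 = (k : ℤ) - n - 2 := by push_cast; ring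
    have g4 : (k : ℤ) - 1 - ((n + 1 : ℕ) : ℤ) = (k : ℤ) - n - 2 := by push_cast; ring
    have g0 : (k : ℤ) - ((n + 1 : ℕ) : ℤ) = (k : ℤ) - n - 1 := by push_cast; ring
    rw [g3, g1, g4, g0]
    have hch1 : (n + 1 + 1).choose 3 = (n + 2).choose 3 := by norm_num
    have hch2 : (n + 1 + 2).choose 3 = (n + 3).choose 3 := by norm_num
    rw [hch1, hch2]
    have cc : ((n + 3).choose 3 : ℤ) = ((n:ℤ) + 1) ^ 2 + ((n + 1).choose 3 : ℤ) := by
      rw [ch3 n]; push_cast; ring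
    push_cast
    linear_combination ih + ((n + 3).choose 3 : ℤ) * r1 + ((n + 3).choose 3 : ℤ) * r2
      - msetZ (d - 1) ((k : ℤ) - n - 1) * cc

theorem stmt17 (d k n : ℕ) (hd : 2 ≤ d) (hk : 2 ≤ k) (hn : 2 ≤ n) (hnk : n ≤ k) :
    (∑ l ∈ Finset.Icc 1 n, (l : ℤ) ^ 2 * msetZ (d - 1) ((k : ℤ) - l)) -
      ∑ l ∈ Finset.Icc 1 n, (Nat.choose (l + 2) 3 : ℤ) *
        (msetZ (d - 2) ((k : ℤ) - l) + msetZ (d - 2) ((k : ℤ) - 1 - l)) =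
    (Nat.choose (n + 1) 3 : ℤ) * msetZ (d - 1) ((k : ℤ) - n - 1) +
      (Nat.choose (n + 2) 3 : ℤ) * msetZ (d - 1) ((k : ℤ) - n - 2) := by
  exact key_s17 d k n hd (by omega)
end

section
/- For all integers d ≥ 2 and k ≥ 1, the following identity holds in ℕ: ∑_{ℓ₀=1}^{k} ∑_{ℓ₁=1}^{k+1−ℓ₀} ℓ₀ · ℓ₁ · ⟨d−2⟩_{k+1−ℓ₀−ℓ₁} + d · ∑_{ℓ₀=1}^{k−1} ∑_{ℓ₁=1}^{k−ℓ₀} ℓ₀ · ℓ₁ · ⟨d−2⟩_{k−ℓ₀−ℓ₁} = k · Nat.choose (d + k − 1) (k − 1) (equivalently, b_k + d·c_k = d_k/d, where d_k = Nat.choose (d+k−1) k, identifying the largest eigenvalue of the Gram operator M†M of the partition map). -/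
lemma mset_eq (x t : ℕ) : mset x t = Nat.multichoose x t :=
  (Nat.multichoose_eq x t).symm

lemma conv (x y m : ℕ) :
    ∑ t ∈ Finset.range (m + 1), Nat.multichoose x t * Nat.multichoose y (m - t)
      = Nat.multichoose (x + y) m := by
  induction x generalizing m with
  | zero =>
    rw [Finset.sum_eq_single 0]
    · simp
    · intro b _ hb
      obtain ⟨c, rfl⟩ := Nat.exists_eq_succ_of_ne_zero hb
      simp [Nat.multichoose_zero_succ]
    · simp
  | succ x ihx =>
    induction m with
    | zero => simp
    | succ m ihm =>
      have A := ihx (m + 1)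
      rw [Finset.sum_range_succ'] at A
      rw [Finset.sum_range_succ']
      have hmc : ∀ i, Nat.multichoose (x + 1) (i + 1) * Nat.multichoose y (m + 1 - (i + 1))
          = Nat.multichoose x (i + 1) * Nat.multichoose y (m + 1 - (i + 1))
            + Nat.multichoose (x + 1) i * Nat.multichoose y (m - i) := by
        intro i
        rw [Nat.multichoose_succ_succ, Nat.add_mul, Nat.succ_sub_succ]
      simp only [hmc]
      rw [Finset.sum_add_distrib, ihm]
      simp only [Nat.multichoose_zero_right, one_mul, Nat.sub_zero] at A ⊢
      have hx : x + 1 + y = (x + y) + 1 := by omega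
      rw [hx, Nat.multichoose_succ_succ (x + y) m]
      omega

lemma Ssum (x n : ℕ) :
    ∑ l0 ∈ Finset.Icc 1 (n + 1), ∑ l1 ∈ Finset.Icc 1 (n + 2 - l0),
        l0 * l1 * mset x (n + 2 - l0 - l1) = Nat.multichoose (x + 4) n := by
  rw [← Finset.Ico_add_one_right_eq_Icc, Finset.sum_Ico_eq_sum_range]
  have hr : n + 1 + 1 - 1 = n + 1 := by omega
  rw [hr]
  have h1 : ∀ a ∈ Finset.range (n + 1),
      (∑ l1 ∈ Finset.Icc 1 (n + 2 - (1 + a)), (1 + a) * l1 * mset x (n + 2 - (1 + a) - l1))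
        = (a + 1) * Nat.multichoose (2 + x) (n - a) := by
    intro a ha
    rw [Finset.mem_range] at ha
    have hle : a ≤ n := Nat.lt_succ_iff.mp ha
    have h2 : n + 2 - (1 + a) = (n - a) + 1 := by omega
    rw [h2, ← Finset.Ico_add_one_right_eq_Icc, Finset.sum_Ico_eq_sum_range]
    have h3 : n - a + 1 + 1 - 1 = (n - a) + 1 := by omega
    rw [h3, ← conv 2 x (n - a), Finset.mul_sum]
    apply Finset.sum_congr rfl
    intro b hb
    rw [Finset.mem_range] at hb
    have h4 : (a + 1) * (Nat.multichoose 2 b * Nat.multichoose x (n - a - b)) =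
        (1 + a) * (1 + b) * mset x (n - a + 1 - (1 + b)) := by
      rw [mset_eq, Nat.multichoose_two]
      have : n - a + 1 - (1 + b) = n - a - b := by omega
      rw [this]; ring
    rw [h4]
  rw [Finset.sum_congr rfl h1, show x + 4 = 2 + (2 + x) by omega, ← conv 2 (2 + x) n]
  · apply Finset.sum_congr rfl
    intro a ha
    rw [Nat.multichoose_two]

theorem stmt18 (d k : ℕ) (hd : 2 ≤ d) (hk : 1 ≤ k) :
    (∑ l0 ∈ Finset.Icc 1 k, ∑ l1 ∈ Finset.Icc 1 (k + 1 - l0),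
        l0 * l1 * mset (d - 2) (k + 1 - l0 - l1)) +
      d * ∑ l0 ∈ Finset.Icc 1 (k - 1), ∑ l1 ∈ Finset.Icc 1 (k - l0),
        l0 * l1 * mset (d - 2) (k - l0 - l1) =
    k * Nat.choose (d + k - 1) (k - 1) := by
  obtain ⟨e, rfl⟩ : ∃ e, d = e + 2 := ⟨d - 2, by omega⟩
  obtain ⟨m, rfl⟩ : ∃ m, k = m + 1 := ⟨k - 1, by omega⟩
  simp only [Nat.add_sub_cancel, show e + 2 - 2 = e from rfl]
  have hfirst : (∑ l0 ∈ Finset.Icc 1 (m + 1), ∑ l1 ∈ Finset.Icc 1 (m + 1 + 1 - l0),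
      l0 * l1 * mset e (m + 1 + 1 - l0 - l1)) = Nat.multichoose (e + 4) m := Ssum e m
  rw [hfirst]
  cases m with
  | zero => simp [Nat.multichoose_zero_right]
  | succ m' =>
    have hsecond : (∑ l0 ∈ Finset.Icc 1 (m' + 1), ∑ l1 ∈ Finset.Icc 1 (m' + 1 + 1 - l0),
        l0 * l1 * mset e (m' + 1 + 1 - l0 - l1)) = Nat.multichoose (e + 4) m' := Ssum e m'
    rw [hsecond, Nat.multichoose_eq, Nat.multichoose_eq]
    have h1 : e + 4 + (m' + 1) - 1 = (e + m' + 3) + 1 := by omega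
    have h2 : e + 4 + m' - 1 = e + m' + 3 := by omega
    have h3 : e + 2 + (m' + 1 + 1) - 1 = e + m' + 3 := by omega
    rw [h1, h2, h3]
    have key := Nat.choose_succ_right_eq (e + m' + 3) m'
    have hsub : e + m' + 3 - m' = e + 3 := by omega
    rw [hsub] at key
    rw [Nat.choose_succ_succ (e + m' + 3) m']
    nlinarith [key]
end
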